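/- Let p be a nonzero univariate real polynomial whose support contains both an even exponent and an odd exponent, and let d ≥ 2 be the number of nonzero coefficients of p. Then the set {|r| : r ∈ ℝ, r ≠ 0, p(r) = 0} of absolute values of the nonzero real roots of p has at most 2d − 3 elements. -/

import Mathlib

open Polynomial Finset Set

namespace Aux11

/-- positive roots of a real polynomial, as a finset -/
noncomputable def posR (p : ℝ[X]) : Finset ℝ := p.roots.toFinset.filter (0 < ·)

lemma mem_posR {p : ℝ[X]} (hp : p ≠ 0) {x : ℝ} :
    x ∈ posR p ↔ 0 < x ∧ p.eval x = 0 := by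
  simp [posR, Multiset.mem_toFinset, mem_roots hp, IsRoot, and_comm]

lemma posR_neg (p : ℝ[X]) : posR (-p) = posR p := by
  rcases eq_or_ne p 0 with rfl | hp
  · simp
  · ext x; rw [mem_posR (neg_ne_zero.2 hp), mem_posR hp]; simp

lemma posR_C_mul_X_pow (c : ℝ) (k : ℕ) : posR (C c * X ^ k) = ∅ := by
  rcases eq_or_ne c 0 with rfl | hc
  · simp [posR]
  · ext x
    rw [mem_posR (by simp [hc] : (C c * X ^ k : ℝ[X]) ≠ 0)]
    simp only [eval_mul, eval_C, eval_pow, eval_X, Finset.notMem_empty, iff_false]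
    rintro ⟨hx, h⟩
    exact absurd h (by positivity)

lemma posR_mul_X (q : ℝ[X]) (hq : q ≠ 0) : posR (q * X) = posR q := by
  have hqX : q * X ≠ 0 := mul_ne_zero hq X_ne_zero
  ext x
  rw [mem_posR hqX, mem_posR hq]
  simp only [eval_mul, eval_X]
  constructor
  · rintro ⟨hx, h⟩
    rcases mul_eq_zero.1 h with h | h
    · exact ⟨hx, h⟩
    · exact absurd h hx.ne'
  · rintro ⟨hx, h⟩
    exact ⟨hx, by rw [h, zero_mul]⟩

lemma trailingCoeff_neg (p : ℝ[X]) : (-p).trailingCoeff = -p.trailingCoeff := by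
  rw [trailingCoeff, natTrailingDegree_neg, coeff_neg, trailingCoeff]

/-- plain Rolle for positive roots -/
lemma rolle_basic (p : ℝ[X]) (hp : p ≠ 0) :
    (posR p).card ≤ (posR (derivative p)).card + 1 := by
  rcases eq_or_ne (derivative p) 0 with hp' | hp'
  · rw [eq_C_of_derivative_eq_zero hp']
    rcases eq_or_ne (p.coeff 0) 0 with h | h
    · simp [h, posR]
    · have hC : (C (p.coeff 0) : ℝ[X]) ≠ 0 := by simpa using h
      have : posR (C (p.coeff 0)) = ∅ := by
        ext x; rw [mem_posR hC]; simp [h]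
      simp [this]
  · calc (posR p).card ≤ (posR (derivative p) \ posR p).card + 1 := by
          refine Finset.card_le_diff_of_interleaved fun x hx y hy hxy hxy' => ?_
          rw [mem_posR hp] at hx hy
          obtain ⟨z, hz1, hz2⟩ := exists_deriv_eq_zero hxy p.continuousOn
            (hx.2.trans hy.2.symm)
          refine ⟨z, (mem_posR hp').2 ⟨hx.1.trans hz1.1, ?_⟩, hz1.1, hz1.2⟩
          rwa [← p.deriv]
        _ ≤ (posR (derivative p)).card + 1 :=
          Nat.add_le_add_right (Finset.card_mono Finset.sdiff_subset) _

/-- A polynomial with positive trailing coefficient is positive somewhere in every `(0, ε)`. -/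
lemma exists_pos_eval_near_zero {q : ℝ[X]} (hq : 0 < q.trailingCoeff) {ε : ℝ} (hε : 0 < ε) :
    ∃ x : ℝ, 0 < x ∧ x < ε ∧ 0 < q.eval x := by
  have hq0 : q ≠ 0 := fun h => by simp [h] at hq
  set t := q.natTrailingDegree with ht
  obtain ⟨r, hr⟩ : (X : ℝ[X]) ^ t ∣ q :=
    X_pow_dvd_iff.2 fun d hd => coeff_eq_zero_of_lt_natTrailingDegree hd
  have hr0 : 0 < r.coeff 0 := by
    have : q.coeff t = r.coeff 0 := by rw [hr, coeff_X_pow_mul']; simp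
    rwa [← this]
  have hcont : ContinuousAt (fun x => r.eval x) 0 := (Polynomial.continuous r).continuousAt
  have h0 : (0:ℝ) < r.eval 0 := by rwa [Polynomial.coeff_zero_eq_eval_zero] at hr0
  have hev : ∀ᶠ x in nhds (0:ℝ), 0 < r.eval x := hcont.eventually (lt_mem_nhds h0)
  obtain ⟨δ, hδ, hball⟩ := Metric.eventually_nhds_iff.1 hev
  refine ⟨min ε δ / 2, by positivity, ?_, ?_⟩
  · calc min ε δ / 2 ≤ ε / 2 := by gcongr; exact min_le_left _ _
      _ < ε := by linarith
  · have hx : 0 < min ε δ / 2 := by positivity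
    have hdist : dist (min ε δ / 2) (0:ℝ) < δ := by
      rw [Real.dist_eq, sub_zero, abs_of_pos hx]
      calc min ε δ / 2 ≤ δ / 2 := by gcongr; exact min_le_right _ _
        _ < δ := by linarith
    have := hball hdist
    rw [hr]
    simp only [eval_mul, eval_pow, eval_X]
    positivity

/-- refined Rolle: if the constant term of `p` and the trailing coefficient of `p'` are both
positive, there is an extra root of `p'` below the least positive root of `p`. -/
lemma rolle_refined_pos (p : ℝ[X]) (hp : p ≠ 0) (hp' : derivative p ≠ 0)
    (hc : 0 < p.coeff 0) (ht : 0 < (derivative p).trailingCoeff) :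
    (posR p).card ≤ (posR (derivative p)).card := by
  have hc0 : 0 < p.eval 0 := by rwa [Polynomial.coeff_zero_eq_eval_zero] at hc
  have key : ∀ y : ℝ, 0 < y → p.eval y = 0 → (∀ w, 0 < w → w < y → p.eval w ≠ 0) →
      ∃ z, 0 < z ∧ z < y ∧ (derivative p).eval z = 0 := by
    intro y hy hpy hnr
    have hpos : ∀ w, 0 ≤ w → w < y → 0 < p.eval w := by
      intro w hw hwy
      rcases eq_or_lt_of_le hw with rfl | hw'
      · exact hc0
      by_contra hle
      push_neg at hle
      obtain ⟨r, hr, hr0⟩ := intermediate_value_Icc' hw'.le p.continuousOn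
        (show (0:ℝ) ∈ Icc (p.eval w) (p.eval 0) from ⟨hle, hc0.le⟩)
      rcases eq_or_lt_of_le hr.1 with rfl | hrpos
      · exact absurd hr0 hc0.ne'
      · exact hnr r hrpos (lt_of_le_of_lt hr.2 hwy) hr0
    have hy2 : 0 < p.eval (y/2) := hpos (y/2) (by linarith) (by linarith)
    obtain ⟨ξ, hξmem, hξ⟩ := exists_deriv_eq_slope (fun x => p.eval x)
      (show y/2 < y by linarith) p.continuousOn p.differentiable.differentiableOn
    have hξ' : (derivative p).eval ξ < 0 := by
      rw [← p.deriv, hξ, hpy]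
      apply div_neg_of_neg_of_pos <;> linarith
    obtain ⟨x1, hx1pos, hx1lt, hx1⟩ := exists_pos_eval_near_zero ht (show (0:ℝ) < y/2 by linarith)
    have hx1ξ : x1 < ξ := lt_trans hx1lt hξmem.1
    obtain ⟨z, hz, hz0⟩ := intermediate_value_Icc' hx1ξ.le (derivative p).continuousOn
      (show (0:ℝ) ∈ Icc ((derivative p).eval ξ) ((derivative p).eval x1) from ⟨hξ'.le, hx1.le⟩)
    have hzx1 : x1 < z := lt_of_le_of_ne hz.1 (by rintro rfl; exact hx1.ne' hz0)
    have hzξ : z < ξ := lt_of_le_of_ne hz.2 (by rintro rfl; exact hξ'.ne hz0)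
    exact ⟨z, lt_trans hx1pos hzx1, lt_trans hzξ hξmem.2, hz0⟩
  have h0notmem : (0:ℝ) ∉ posR p := fun h => lt_irrefl 0 ((mem_posR hp).1 h).1
  have step : (insert (0:ℝ) (posR p)).card ≤
      (posR (derivative p) \ insert 0 (posR p)).card + 1 := by
    refine Finset.card_le_diff_of_interleaved fun x hx y hy hxy hxy' => ?_
    have hymem : y ∈ posR p := by
      rcases Finset.mem_insert.1 hy with rfl | hy'
      · rcases Finset.mem_insert.1 hx with rfl | hx'
        · exact absurd hxy (lt_irrefl 0)
        · exact absurd hxy (not_lt.2 ((mem_posR hp).1 hx').1.le)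
      · exact hy'
    obtain ⟨hypos, hyroot⟩ := (mem_posR hp).1 hymem
    rcases Finset.mem_insert.1 hx with rfl | hx'
    · have hnr : ∀ w, 0 < w → w < y → p.eval w ≠ 0 := by
        intro w hw hwy hweval
        exact hxy' w (Finset.mem_insert_of_mem ((mem_posR hp).2 ⟨hw, hweval⟩)) ⟨hw, hwy⟩
      obtain ⟨z, hz1, hz2, hz3⟩ := key y hypos hyroot hnr
      exact ⟨z, (mem_posR hp').2 ⟨hz1, hz3⟩, hz1, hz2⟩
    · obtain ⟨hxpos, hxroot⟩ := (mem_posR hp).1 hx'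
      obtain ⟨z, hz1, hz2⟩ := exists_deriv_eq_zero hxy p.continuousOn (hxroot.trans hyroot.symm)
      refine ⟨z, (mem_posR hp').2 ⟨hxpos.trans hz1.1, ?_⟩, hz1.1, hz1.2⟩
      rwa [← p.deriv]
  rw [Finset.card_insert_of_notMem h0notmem] at step
  have : (posR (derivative p) \ insert 0 (posR p)).card ≤ (posR (derivative p)).card :=
    Finset.card_mono Finset.sdiff_subset
  omega

lemma coeff_comp_neg_X (p : ℝ[X]) (n : ℕ) :
    (p.comp (-X)).coeff n = (-1) ^ n * p.coeff n := by
  induction p using Polynomial.induction_on' with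
  | add f g hf hg => simp [add_comp, hf, hg, mul_add]
  | monomial k a =>
    have hx : ((-X : ℝ[X])) ^ k = C ((-1 : ℝ) ^ k) * X ^ k := by
      rw [← neg_one_mul, mul_pow]
      congr 1
      rw [← C_1, ← C_neg, ← C_pow]
    rw [monomial_comp, hx, ← mul_assoc, ← C_mul, coeff_C_mul_X_pow]
    rcases eq_or_ne n k with rfl | hnk
    · simp [coeff_monomial, mul_comm]
    · simp [coeff_monomial, hnk, Ne.symm hnk]

lemma support_comp_neg_X (p : ℝ[X]) : (p.comp (-X)).support = p.support := by
  ext n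
  simp only [mem_support_iff, coeff_comp_neg_X]
  constructor
  · intro h h'; simp [h'] at h
  · intro h h'
    rcases mul_eq_zero.1 h' with h'' | h''
    · exact absurd h'' (by positivity)
    · exact h h''

lemma comp_neg_X_ne_zero {p : ℝ[X]} (hp : p ≠ 0) : p.comp (-X) ≠ 0 := by
  intro h
  apply hp
  have := congrArg (fun q => Polynomial.comp q (-X)) h
  simpa [comp_neg_X_comp_neg_X] using this

lemma natTrailingDegree_comp_neg_X (p : ℝ[X]) :
    (p.comp (-X)).natTrailingDegree = p.natTrailingDegree := by
  have htd : (p.comp (-X)).trailingDegree = p.trailingDegree := by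
    rw [trailingDegree, trailingDegree, support_comp_neg_X]
  rw [natTrailingDegree, natTrailingDegree, htd]

lemma trailingCoeff_comp_neg_X (p : ℝ[X]) :
    (p.comp (-X)).trailingCoeff = (-1) ^ p.natTrailingDegree * p.trailingCoeff := by
  rw [trailingCoeff, natTrailingDegree_comp_neg_X, coeff_comp_neg_X, trailingCoeff]

lemma rolle_refined (p : ℝ[X]) (hp : p ≠ 0) (hp' : derivative p ≠ 0)
    (h : 0 < p.coeff 0 * (derivative p).trailingCoeff) :
    (posR p).card ≤ (posR (derivative p)).card := by
  rcases mul_pos_iff.1 h with ⟨hc, ht⟩ | ⟨hc, ht⟩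
  · exact rolle_refined_pos p hp hp' hc ht
  · have hdneg : derivative (-p) = -derivative p := by simp
    have := rolle_refined_pos (-p) (neg_ne_zero.2 hp)
      (by rw [hdneg]; exact neg_ne_zero.2 hp')
      (by rw [coeff_neg]; linarith)
      (by rw [hdneg, trailingCoeff_neg]; linarith)
    rwa [posR_neg, hdneg, posR_neg] at this

lemma comb (p : ℝ[X]) (hp : p ≠ 0) (hp' : derivative p ≠ 0)
    (hc : p.coeff 0 ≠ 0) (hteven : Even (derivative p).natTrailingDegree) :
    (posR p).card + (posR (p.comp (-X))).card ≤
      (posR (derivative p)).card + (posR ((derivative p).comp (-X))).card + 1 := by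
  set q := p.comp (-X) with hqdef
  have hq : q ≠ 0 := comp_neg_X_ne_zero hp
  have hdq : derivative q = -((derivative p).comp (-X)) := by
    rw [hqdef, derivative_comp]
    simp [neg_one_mul]
  have hq0 : q.coeff 0 = p.coeff 0 := by rw [hqdef, coeff_comp_neg_X]; simp
  have hp'c : (derivative p).comp (-X) ≠ 0 := comp_neg_X_ne_zero hp'
  have hdq0 : derivative q ≠ 0 := by rw [hdq]; exact neg_ne_zero.2 hp'c
  have htq : (derivative q).trailingCoeff = -(derivative p).trailingCoeff := by
    rw [hdq, trailingCoeff_neg, trailingCoeff_comp_neg_X, hteven.neg_one_pow, one_mul]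
  have hτ : (derivative p).trailingCoeff ≠ 0 := trailingCoeff_nonzero_iff_nonzero.2 hp'
  rcases (mul_ne_zero hc hτ).lt_or_gt with hneg | hpos
  · have h1 : (posR q).card ≤ (posR (derivative q)).card :=
      rolle_refined q hq hdq0 (by rw [hq0, htq]; nlinarith)
    have h2 := rolle_basic p hp
    rw [hdq, posR_neg] at h1
    omega
  · have h1 : (posR p).card ≤ (posR (derivative p)).card :=
      rolle_refined p hp hp' hpos
    have h2 := rolle_basic q hq
    rw [hdq, posR_neg] at h2
    omega

lemma support_derivative_image (p : ℝ[X]) :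
    ((derivative p).support).image (· + 1) = p.support.erase 0 := by
  ext m
  simp only [Finset.mem_image, mem_support_derivative, Finset.mem_erase]
  constructor
  · rintro ⟨a, ha, rfl⟩; exact ⟨Nat.succ_ne_zero a, ha⟩
  · rintro ⟨hm, hmem⟩
    exact ⟨m - 1, by rwa [Nat.sub_add_cancel (Nat.one_le_iff_ne_zero.2 hm)],
      Nat.sub_add_cancel (Nat.one_le_iff_ne_zero.2 hm)⟩

lemma support_divX_image {p : ℝ[X]} (h0 : p.coeff 0 = 0) :
    (p.divX.support).image (· + 1) = p.support := by
  ext m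
  simp only [Finset.mem_image, mem_support_iff, coeff_divX]
  constructor
  · rintro ⟨a, ha, rfl⟩; exact ha
  · intro hm
    have hm0 : m ≠ 0 := fun h => hm (h ▸ h0)
    exact ⟨m - 1, by rwa [Nat.sub_add_cancel (Nat.one_le_iff_ne_zero.2 hm0)],
      Nat.sub_add_cancel (Nat.one_le_iff_ne_zero.2 hm0)⟩

/-- The main inductive bound. -/
lemma main : ∀ n : ℕ, ∀ p : ℝ[X], p ≠ 0 → p.natDegree ≤ n →
    ((posR p).card + (posR (p.comp (-X))).card + 2 ≤ 2 * p.support.card ∧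
     ((∃ m ∈ p.support, Even m) → (∃ m ∈ p.support, Odd m) →
       (posR p).card + (posR (p.comp (-X))).card + 3 ≤ 2 * p.support.card)) := by
  intro n
  induction n using Nat.strong_induction_on with
  | _ n IH =>
  intro p hp hdeg
  rcases Nat.lt_or_ge p.support.card 2 with hcard | hcard
  · -- p is a monomial
    have h1 : p.support.card = 1 :=
      le_antisymm (by omega) (Finset.card_pos.2 (support_nonempty.2 hp))
    obtain ⟨k, c, hc, rfl⟩ := card_support_eq_one.1 h1
    have e1 : posR (C c * X ^ k) = ∅ := posR_C_mul_X_pow c k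
    have e2 : posR ((C c * X ^ k : ℝ[X]).comp (-X)) = ∅ := by
      have hx : ((-X : ℝ[X])) ^ k = C ((-1 : ℝ) ^ k) * X ^ k := by
        rw [← neg_one_mul, mul_pow]
        congr 1
        rw [← C_1, ← C_neg, ← C_pow]
      rw [mul_comp, C_comp, X_pow_comp, hx, ← mul_assoc, ← C_mul]
      exact posR_C_mul_X_pow _ k
    have hsupp : (C c * X ^ k : ℝ[X]).support = {k} := support_C_mul_X_pow k hc
    constructor
    · rw [e1, e2, h1]; simp
    · rintro ⟨m, hm, hme⟩ ⟨m', hm', hmo⟩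
      rw [hsupp, Finset.mem_singleton] at hm hm'
      subst hm; subst hm'
      exact absurd hme (Nat.not_even_iff_odd.2 hmo)
  · -- at least two terms
    have hnd : p.natDegree ≠ 0 := by
      intro h
      have h2 := p.card_supp_le_succ_natDegree
      rw [h] at h2; omega
    rcases eq_or_ne (p.coeff 0) 0 with h0 | h0
    · -- divX step
      set q := p.divX with hqd
      have hpq : p = q * X := by
        conv_lhs => rw [← divX_mul_X_add p]
        rw [h0]; simp [hqd]
      have hq0 : q ≠ 0 := by
        intro h; rw [hpq, h, zero_mul] at hp; exact hp rfl
      have hnat : p.natDegree = q.natDegree + 1 := by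
        rw [hpq, natDegree_mul hq0 X_ne_zero, natDegree_X]
      have hsupp : q.support.image (· + 1) = p.support := support_divX_image h0
      have hcardq : q.support.card = p.support.card := by
        rw [← hsupp, Finset.card_image_of_injective _ (add_left_injective 1)]
      have hn1 : 1 ≤ n := by omega
      have IHq := IH (n-1) (by omega) q hq0 (by omega)
      have e1 : posR p = posR q := by rw [hpq, posR_mul_X q hq0]
      have e2 : posR (p.comp (-X)) = posR (q.comp (-X)) := by
        rw [hpq, mul_comp, X_comp]
        have heq : q.comp (-X) * (-X) = -(q.comp (-X) * X) := by ring
        rw [heq, posR_neg, posR_mul_X _ (comp_neg_X_ne_zero hq0)]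
      have hev : (∃ m ∈ p.support, Even m) ↔ (∃ m ∈ q.support, Odd m) := by
        rw [← hsupp]
        constructor
        · rintro ⟨m, hm, hme⟩
          obtain ⟨a, ha, rfl⟩ := Finset.mem_image.1 hm
          exact ⟨a, ha, Nat.not_even_iff_odd.1 (Nat.even_add_one.1 hme)⟩
        · rintro ⟨a, ha, hao⟩
          exact ⟨a + 1, Finset.mem_image_of_mem _ ha,
            Nat.even_add_one.2 (Nat.not_even_iff_odd.2 hao)⟩
      have hod : (∃ m ∈ p.support, Odd m) ↔ (∃ m ∈ q.support, Even m) := by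
        rw [← hsupp]
        constructor
        · rintro ⟨m, hm, hme⟩
          obtain ⟨a, ha, rfl⟩ := Finset.mem_image.1 hm
          exact ⟨a, ha, (Nat.not_odd_iff_even.1 (Nat.odd_add_one.1 hme) : Even a)⟩
        · rintro ⟨a, ha, hao⟩
          exact ⟨a + 1, Finset.mem_image_of_mem _ ha, Nat.odd_add_one.2 (Nat.not_odd_iff_even.2 hao)⟩
      constructor
      · rw [e1, e2, ← hcardq]; exact IHq.1
      · intro hE hO
        rw [e1, e2, ← hcardq]
        exact IHq.2 (hod.1 hO) (hev.1 hE)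
    · -- derivative step
      have h0mem : (0:ℕ) ∈ p.support := mem_support_iff.2 h0
      have hp' : derivative p ≠ 0 := by
        intro h
        have hC := eq_C_of_derivative_eq_zero h
        have h2 : p.support.card ≤ 1 := by
          rw [hC]
          rcases eq_or_ne (p.coeff 0) 0 with h' | h'
          · simp [h']
          · rw [support_C h']; simp
        omega
      have hcard' : (derivative p).support.card + 1 = p.support.card := by
        have himg := congrArg Finset.card (support_derivative_image p)
        rw [Finset.card_image_of_injective _ (add_left_injective 1),
          Finset.card_erase_of_mem h0mem] at himg
        omega
      have hdlt := natDegree_derivative_lt hnd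
      have hn1 : 1 ≤ n := by omega
      have IH' := IH (n-1) (by omega) (derivative p) hp' (by omega)
      rcases Nat.even_or_odd (derivative p).natTrailingDegree with hte | hto
      · -- second exponent of p is odd: use the combined refined bound
        have hcb := comb p hp hp' h0 hte
        have hI := IH'.1
        exact ⟨by omega, fun _ _ => by omega⟩
      · -- second exponent of p is even: both parities already occur in p'
        have h1 := rolle_basic p hp
        have h2 := rolle_basic (p.comp (-X)) (comp_neg_X_ne_zero hp)
        have hdc : derivative (p.comp (-X)) = -((derivative p).comp (-X)) := by
          rw [derivative_comp]; simp [neg_one_mul]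
        rw [hdc, posR_neg] at h2
        constructor
        · have hI := IH'.1; omega
        · intro hE hO
          obtain ⟨f, hf, hfo⟩ := hO
          have hf0 : f ≠ 0 := by
            intro h; rw [h] at hfo; exact (Nat.not_even_iff_odd.2 hfo) Even.zero
          have hfm : f - 1 ∈ (derivative p).support := by
            rw [mem_support_derivative, Nat.sub_add_cancel (Nat.one_le_iff_ne_zero.2 hf0)]
            exact hf
          have hE' : ∃ m ∈ (derivative p).support, Even m := by
            refine ⟨f - 1, hfm, ?_⟩
            obtain ⟨j, rfl⟩ := hfo
            simpa using even_two_mul j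
          have hO' : ∃ m ∈ (derivative p).support, Odd m :=
            ⟨(derivative p).natTrailingDegree, natTrailingDegree_mem_support_of_nonzero hp', hto⟩
          have hI := IH'.2 hE' hO'
          omega

end Aux11

theorem stmt11 (p : Polynomial ℝ) (hp : p ≠ 0)
    (heven : ∃ m ∈ p.support, Even m) (hodd : ∃ m ∈ p.support, Odd m)
    (d : ℕ) (hd : d = p.support.card) (hd2 : 2 ≤ d) :
    {s : ℝ | ∃ r : ℝ, r ≠ 0 ∧ p.eval r = 0 ∧ s = |r|}.ncard ≤ 2 * d - 3 := by
  have hB := (Aux11.main p.natDegree p hp le_rfl).2 heven hodd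
  have hset : {s : ℝ | ∃ r : ℝ, r ≠ 0 ∧ p.eval r = 0 ∧ s = |r|} =
      ↑(Aux11.posR p ∪ Aux11.posR (p.comp (-Polynomial.X))) := by
    ext s
    simp only [Set.mem_setOf_eq, Finset.coe_union, Set.mem_union, Finset.mem_coe]
    rw [Aux11.mem_posR hp, Aux11.mem_posR (Aux11.comp_neg_X_ne_zero hp)]
    constructor
    · rintro ⟨r, hr0, hr, rfl⟩
      rcases hr0.lt_or_gt with h | h
      · right
        refine ⟨abs_pos.2 hr0, ?_⟩
        rw [Polynomial.eval_comp]
        simpa [abs_of_neg h] using hr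
      · left
        exact ⟨abs_pos.2 hr0, by rw [abs_of_pos h]; exact hr⟩
    · rintro (⟨hs, h⟩ | ⟨hs, h⟩)
      · exact ⟨s, hs.ne', h, (abs_of_pos hs).symm⟩
      · refine ⟨-s, neg_ne_zero.2 hs.ne', ?_, by rw [abs_neg, abs_of_pos hs]⟩
        rw [Polynomial.eval_comp] at h
        simpa using h
  rw [hset, Set.ncard_coe_finset]
  have hcu := Finset.card_union_le (Aux11.posR p) (Aux11.posR (p.comp (-Polynomial.X)))
  omega
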